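/- Let 2 < p < q and let (a,b,c) ∈ ℝ × ℝ × (0,∞) satisfy a + b = c and a·p = c·q. Define f : [0,∞) → ℝ by f(x) = a·x^p + b for x > 1 and f(x) = c·x^q for 0 ≤ x ≤ 1. Then there exists δ > 0 and K > 0 such that for all x ∈ (1, 1+δ) and y ∈ (1−δ, 1), one has f(x) − f(y) − f'(y)·(x−y) ≥ K·|x−y|^q. -/

import Mathlib

open Real

set_option maxHeartbeats 1000000

/-- Improved Bernoulli: `(1+u)^r ≥ 1 + r u + (r/2) u²` for `u ≥ 0`, `r ≥ 2`. -/
lemma bern_aux (u r : ℝ) (hu : 0 ≤ u) (hr : 2 ≤ r) :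
    1 + r * u + (r / 2) * u ^ 2 ≤ (1 + u) ^ r := by
  have h1 : (0:ℝ) ≤ 1 + u := by linarith
  have key : 1 + (r/2) * (2*u + u^2) ≤ (1 + (2*u + u^2)) ^ (r/2) :=
    one_add_mul_self_le_rpow_one_add (by nlinarith) (by linarith)
  have h2 : (1 + (2*u + u^2)) = (1 + u) ^ (2:ℝ) := by
    rw [Real.rpow_two]; ring
  have h3 : ((1 + u) ^ (2:ℝ)) ^ (r/2) = (1 + u) ^ r := by
    rw [← Real.rpow_mul h1]
    congr 1
    ring
  rw [h2, h3] at key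
  linarith

theorem stmt0 (p q a b c : ℝ) (hp : 2 < p) (hpq : p < q)
    (hc : 0 < c) (habc : a + b = c) (hapcq : a * p = c * q)
    (f : ℝ → ℝ)
    (hf₁ : ∀ x : ℝ, 1 < x → f x = a * x ^ p + b)
    (hf₂ : ∀ x : ℝ, 0 ≤ x → x ≤ 1 → f x = c * x ^ q) :
    ∃ δ > (0:ℝ), ∃ K > (0:ℝ), ∀ x y : ℝ, 1 < x → x < 1 + δ → 1 - δ < y → y < 1 →
      f x - f y - deriv f y * (x - y) ≥ K * |x - y| ^ q := by
  have hq2 : (2:ℝ) < q := lt_trans hp hpq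
  have hq0 : (0:ℝ) < q := by linarith
  have ha : 0 < a := by nlinarith [mul_pos hc hq0]
  set m : ℝ := (1/2 : ℝ) ^ q with hm_def
  have hm : 0 < m := Real.rpow_pos_of_pos (by norm_num) q
  set K : ℝ := min (a * p / 2) (min (c * q / 2) (c * (q / 2) * m)) with hK_def
  have hK : 0 < K := by
    apply lt_min (by nlinarith) (lt_min (by nlinarith) (by positivity))
  have hK1 : K ≤ a * p / 2 := min_le_left _ _
  have hK2 : K ≤ c * q / 2 := le_trans (min_le_right _ _) (min_le_left _ _)
  have hK3 : K ≤ c * (q / 2) * m := le_trans (min_le_right _ _) (min_le_right _ _)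
  clear_value K
  refine ⟨1/2, by norm_num, K, hK, ?_⟩
  intro x y hx1 hx2 hy1 hy2
  have hy0 : 0 < y := by linarith
  have hy12 : (1/2:ℝ) ≤ y := by linarith
  -- the derivative of f at y
  have hd : deriv f y = c * q * y ^ (q - 1) := by
    have hev : f =ᶠ[nhds y] fun t => c * t ^ q := by
      filter_upwards [Ioo_mem_nhds hy0 hy2] with t ht
      exact hf₂ t ht.1.le ht.2.le
    rw [hev.deriv_eq]
    have hder : HasDerivAt (fun t : ℝ => c * t ^ q) (c * (q * y ^ (q-1))) y :=
      (Real.hasDerivAt_rpow_const (Or.inl (ne_of_gt hy0))).const_mul c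
    rw [hder.deriv]; ring
  rw [hf₁ x hx1, hf₂ y hy0.le hy2.le, hd, abs_of_pos (show (0:ℝ) < x - y by linarith)]
  set s : ℝ := y ^ (q - 1) with hs_def
  have hs0 : 0 < s := Real.rpow_pos_of_pos hy0 _
  have hs_le_y : s ≤ y := by
    calc s ≤ y ^ (1:ℝ) := Real.rpow_le_rpow_of_exponent_ge hy0 hy2.le (by linarith)
    _ = y := Real.rpow_one y
  have hyq : y ^ q = y * s := by
    rw [hs_def, show q = 1 + (q - 1) by ring, Real.rpow_add hy0, Real.rpow_one]
    ring_nf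
  have hsm : m ≤ s := by
    rw [hm_def, hs_def]
    calc (1/2:ℝ) ^ q ≤ y ^ q := Real.rpow_le_rpow (by norm_num) hy12 hq0.le
    _ ≤ y ^ (q - 1) := Real.rpow_le_rpow_of_exponent_ge hy0 hy2.le (by linarith)
  -- bound for the x-side
  have hB : 1 + p * (x - 1) + (p/2) * (x - 1)^2 ≤ x ^ p := by
    have h := bern_aux (x - 1) p (by linarith) (by linarith)
    rwa [show (1:ℝ) + (x - 1) = x by ring] at h
  -- bound for the y-side
  have hT2 : (q/2) * m * (1 - y)^2 ≤ 1 - y * s - q * s * (1 - y) := by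
    set u : ℝ := (1 - y) / y with hu_def
    have hu0 : 0 ≤ u := div_nonneg (by linarith) hy0.le
    have hw := bern_aux u q hu0 (by linarith)
    have h1u : 1 + u = 1 / y := by rw [hu_def]; field_simp; ring
    rw [h1u, one_div, Real.inv_rpow hy0.le] at hw
    have hyu : y * u = 1 - y := by rw [hu_def]; field_simp
    have hu_ge : 1 - y ≤ u := by
      rw [hu_def, le_div_iff₀ hy0]; nlinarith
    clear_value u
    have hmul : y * s * (1 + q * u + (q/2) * u^2) ≤ 1 := by
      rw [← hyq]
      calc y ^ q * (1 + q * u + (q/2) * u^2) ≤ y ^ q * (y ^ q)⁻¹ :=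
            mul_le_mul_of_nonneg_left hw (Real.rpow_pos_of_pos hy0 q).le
      _ = 1 := mul_inv_cancel₀ (ne_of_gt (Real.rpow_pos_of_pos hy0 q))
    clear_value s m
    have h1 : q * (y * u) * s = q * (1 - y) * s := by rw [hyu]
    have h2 : (q/2) * ((y * u) * u) * s = (q/2) * ((1 - y) * u) * s := by rw [hyu]
    have key : y * s + q * s * (1 - y) + (q/2) * (s * u) * (1 - y) ≤ 1 := by
      nlinarith [hmul, h1, h2]
    have hsu : m * (1 - y) ≤ s * u := by
      nlinarith [mul_nonneg hu0 (sub_nonneg.2 hsm), mul_nonneg hm.le (sub_nonneg.2 hu_ge)]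
    nlinarith [key, mul_le_mul_of_nonneg_right hsu (by linarith : (0:ℝ) ≤ 1 - y), hq0]
  clear_value s m
  -- the power comparison on the right-hand side
  have hrp : (x - y) ^ q ≤ (x - y)^2 := by
    calc (x - y) ^ q ≤ (x - y) ^ (2:ℝ) :=
          Real.rpow_le_rpow_of_exponent_ge (by linarith) (by linarith) (by linarith)
    _ = (x - y)^2 := Real.rpow_two _
  have hx1' : (0:ℝ) < x - 1 := by linarith
  have hy1' : (0:ℝ) < 1 - y := by linarith
  have e1 : a * (1 + p * (x - 1) + (p/2) * (x - 1)^2) ≤ a * x ^ p :=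
    mul_le_mul_of_nonneg_left hB ha.le
  have e2 : c * ((q/2) * m * (1 - y)^2) ≤ c * (1 - y * s - q * s * (1 - y)) :=
    mul_le_mul_of_nonneg_left hT2 hc.le
  have e3 : c * q * (1 - y) * (x - 1) ≤ c * q * (1 - s) * (x - 1) := by
    nlinarith [mul_nonneg (mul_nonneg (mul_pos hc hq0).le hx1'.le) (sub_nonneg.2 hs_le_y)]
  have e4 : K * (x - y) ^ q ≤ K * (x - y)^2 := mul_le_mul_of_nonneg_left hrp hK.le
  have e5 : K * (x - 1)^2 ≤ a * (p/2) * (x - 1)^2 := by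
    nlinarith [mul_le_mul_of_nonneg_right hK1 (sq_nonneg (x-1))]
  have e6 : K * (1 - y)^2 ≤ c * (q/2) * m * (1 - y)^2 := by
    nlinarith [mul_le_mul_of_nonneg_right hK3 (sq_nonneg (1-y))]
  have e7 : 2 * K * ((1 - y) * (x - 1)) ≤ c * q * ((1 - y) * (x - 1)) := by
    nlinarith [mul_le_mul_of_nonneg_right hK2 (mul_nonneg hy1'.le hx1'.le)]
  have hap : a * p * (x - 1) = c * q * (x - 1) := by rw [hapcq]
  rw [hyq]
  linarith [e1, e2, e3, e4, e5, e6, e7, hap]
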